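/- Let (S,F,μ) be a probability space and A ⊆ F a sub-σ-algebra. Let W : S² → ℝ be a bounded F⊗F-measurable function that is equal almost everywhere to an A⊗F-measurable function and also equal almost everywhere to an F⊗A-measurable function. Then W is equal almost everywhere to a version of E(W | A⊗A). -/

import Mathlib

open MeasureTheory Set

theorem stmt5 {S : Type*} (𝒜 : MeasurableSpace S) {F : MeasurableSpace S}
    (μ : Measure S) [IsProbabilityMeasure μ] (h𝒜 : 𝒜 ≤ F)
    (W : S × S → ℝ) (C : ℝ) (hbd : ∀ p, |W p| ≤ C) (hWmeas : Measurable[F.prod F] W)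
    (g : S × S → ℝ) (hgmeas : Measurable[𝒜.prod F] g) (hWg : W =ᵐ[μ.prod μ] g)
    (h : S × S → ℝ) (hhmeas : Measurable[F.prod 𝒜] h) (hWh : W =ᵐ[μ.prod μ] h) :
    W =ᵐ[μ.prod μ] (μ.prod μ)[W | 𝒜.prod 𝒜] := by
  haveI : SigmaFinite (μ.trim h𝒜) := inferInstance
  have hm : 𝒜.prod 𝒜 ≤ F.prod F :=
    sup_le_sup (MeasurableSpace.comap_mono h𝒜) (MeasurableSpace.comap_mono h𝒜)
  have hm2 : F.prod 𝒜 ≤ F.prod F :=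
    sup_le_sup le_rfl (MeasurableSpace.comap_mono h𝒜)
  have hm12 : 𝒜.prod 𝒜 ≤ F.prod 𝒜 :=
    sup_le_sup (MeasurableSpace.comap_mono h𝒜) le_rfl
  haveI hsf : SigmaFinite ((μ.prod μ).trim hm) := inferInstance
  haveI hsf2 : SigmaFinite ((μ.prod μ).trim hm2) := inferInstance
  -- integrability of W
  have hWae : AEStronglyMeasurable W (μ.prod μ) := hWmeas.stronglyMeasurable.aestronglyMeasurable
  have hWint : Integrable W (μ.prod μ) :=
    ⟨hWae, HasFiniteIntegral.of_bounded (C := C)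
      (Filter.Eventually.of_forall fun p => by simpa [Real.norm_eq_abs] using hbd p)⟩
  have hg_int : Integrable g (μ.prod μ) := hWint.congr hWg
  have hh_int : Integrable h (μ.prod μ) := hWint.congr hWh
  -- one-dimensional key lemma: replacing an indicator by its conditional expectation
  have key1 : ∀ (B : Set S), MeasurableSet[F] B → ∀ (v : S → ℝ), Integrable v μ →
      StronglyMeasurable[𝒜] v →
      ∫ x, B.indicator (fun _ => (1:ℝ)) x * v x ∂μ
        = ∫ x, (μ[B.indicator (fun _ => (1:ℝ))|𝒜]) x * v x ∂μ := by
    intro B hB v hv hvm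
    have hiB : Integrable (B.indicator (fun _ => (1:ℝ))) μ := (integrable_const 1).indicator hB
    have hmul : Integrable (v * B.indicator (fun _ => (1:ℝ))) μ := by
      have : (v * B.indicator (fun _ => (1:ℝ))) = B.indicator v := by
        funext x; by_cases hx : x ∈ B <;> simp [hx]
      rw [this]; exact hv.indicator hB
    have hpull := condExp_mul_of_stronglyMeasurable_left (μ := μ) (m := 𝒜) hvm hmul hiB
    calc ∫ x, B.indicator (fun _ => (1:ℝ)) x * v x ∂μ
        = ∫ x, (v * B.indicator (fun _ => (1:ℝ))) x ∂μ := by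
          refine integral_congr_ae (Filter.Eventually.of_forall fun x => ?_)
          simp [mul_comm]
      _ = ∫ x, (μ[v * B.indicator (fun _ => (1:ℝ))|𝒜]) x ∂μ := (integral_condExp h𝒜).symm
      _ = ∫ x, (v * μ[B.indicator (fun _ => (1:ℝ))|𝒜]) x ∂μ := integral_congr_ae hpull
      _ = ∫ x, (μ[B.indicator (fun _ => (1:ℝ))|𝒜]) x * v x ∂μ := by
          refine integral_congr_ae (Filter.Eventually.of_forall fun x => ?_)
          simp [mul_comm]
  -- two-dimensional version via Fubini
  have key2 : ∀ (B : Set S), MeasurableSet[F] B → ∀ (Cs : Set S), MeasurableSet[F] Cs →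
      ∀ (u : S × S → ℝ), Integrable u (μ.prod μ) →
      (∀ y, StronglyMeasurable[𝒜] fun x => u (x, y)) →
      ∫ z, B.indicator (fun _ => (1:ℝ)) z.1 * Cs.indicator (fun _ => (1:ℝ)) z.2 * u z ∂(μ.prod μ)
        = ∫ z, (μ[B.indicator (fun _ => (1:ℝ))|𝒜]) z.1
            * Cs.indicator (fun _ => (1:ℝ)) z.2 * u z ∂(μ.prod μ) := by
    intro B hB Cs hCs u hu husec
    set iB := B.indicator (fun _ => (1:ℝ)) with hiB_def
    set iC := Cs.indicator (fun _ => (1:ℝ)) with hiC_def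
    set b := μ[iB|𝒜] with hb_def
    have hb_bdd : ∀ᵐ x ∂μ, |b x| ≤ ((1 : NNReal) : ℝ) := by
      refine ae_bdd_condExp_of_ae_bdd (Filter.Eventually.of_forall fun x => ?_)
      by_cases hx : x ∈ B <;> simp [iB, hx]
    have hb_bdd' : ∀ᵐ z ∂(μ.prod μ), |b z.1| ≤ (1 : ℝ) := by
      have := (MeasureTheory.Measure.quasiMeasurePreserving_fst
        (μ := μ) (ν := μ)).ae hb_bdd
      simpa using this
    have hiBm : Measurable iB := measurable_const.indicator hB
    have hiCm : Measurable iC := measurable_const.indicator hCs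
    have hlhs : Integrable (fun z => iB z.1 * iC z.2 * u z) (μ.prod μ) := by
      have haesm : AEStronglyMeasurable (fun z : S × S => iB z.1 * iC z.2) (μ.prod μ) :=
        ((hiBm.comp measurable_fst).mul (hiCm.comp measurable_snd)).aestronglyMeasurable
      refine hu.bdd_mul (c := 1) haesm (Filter.Eventually.of_forall fun z => ?_)
      rw [Real.norm_eq_abs, abs_mul]
      have h1 : |iB z.1| ≤ 1 := by by_cases hx : z.1 ∈ B <;> simp [iB, hx]
      have h2 : |iC z.2| ≤ 1 := by by_cases hx : z.2 ∈ Cs <;> simp [iC, hx]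
      calc |iB z.1| * |iC z.2| ≤ 1 * 1 :=
            mul_le_mul h1 h2 (abs_nonneg _) zero_le_one
        _ = 1 := one_mul 1
    have hbm : StronglyMeasurable[𝒜] b := stronglyMeasurable_condExp
    have hrhs : Integrable (fun z => b z.1 * iC z.2 * u z) (μ.prod μ) := by
      have haesm : AEStronglyMeasurable (fun z : S × S => b z.1 * iC z.2) (μ.prod μ) :=
        (((hbm.mono h𝒜).comp_measurable measurable_fst).mul
          ((hiCm.comp measurable_snd).stronglyMeasurable)).aestronglyMeasurable
      refine hu.bdd_mul (c := 1) haesm ?_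
      filter_upwards [hb_bdd'] with z hz
      rw [Real.norm_eq_abs, abs_mul]
      have h2 : |iC z.2| ≤ 1 := by by_cases hx : z.2 ∈ Cs <;> simp [iC, hx]
      calc |b z.1| * |iC z.2| ≤ 1 * 1 :=
            mul_le_mul hz h2 (abs_nonneg _) zero_le_one
        _ = 1 := one_mul 1
    rw [integral_prod_symm _ hlhs, integral_prod_symm _ hrhs]
    refine integral_congr_ae ?_
    filter_upwards [hu.prod_left_ae] with y hy
    have hv : Integrable (fun x => iC y * u (x, y)) μ := hy.const_mul _
    have hvm : StronglyMeasurable[𝒜] (fun x => iC y * u (x, y)) :=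
      stronglyMeasurable_const.mul (husec y)
    have := key1 B hB _ hv hvm
    simp only [mul_assoc]
    exact this
  -- the conditional expectation
  set k := (μ.prod μ)[W | 𝒜.prod 𝒜] with hk_def
  have hk_meas : StronglyMeasurable[𝒜.prod 𝒜] k := stronglyMeasurable_condExp
  have hk_int : Integrable k (μ.prod μ) := integrable_condExp
  -- sections
  have hksec : ∀ y, StronglyMeasurable[𝒜] fun x => k (x, y) := fun y =>
    hk_meas.comp_measurable (@measurable_prodMk_right S S 𝒜 𝒜 y)
  have hgsec : ∀ y, StronglyMeasurable[𝒜] fun x => g (x, y) := fun y =>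
    ((hgmeas.comp (@measurable_prodMk_right S S 𝒜 F y))).stronglyMeasurable
  -- rectangle step
  have hrect : ∀ (B : Set S), MeasurableSet[F] B → ∀ (Cs : Set S), MeasurableSet[𝒜] Cs →
      ∫ z in B ×ˢ Cs, k z ∂(μ.prod μ) = ∫ z in B ×ˢ Cs, W z ∂(μ.prod μ) := by
    intro B hB Cs hCs
    set iB := B.indicator (fun _ => (1:ℝ)) with hiB_def
    set iC := Cs.indicator (fun _ => (1:ℝ)) with hiC_def
    set b := μ[iB|𝒜] with hb_def
    have hCsF : MeasurableSet[F] Cs := h𝒜 _ hCs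
    have hBC : MeasurableSet (B ×ˢ Cs) := hB.prod hCsF
    have hind : ∀ u : S × S → ℝ, ∀ z, (B ×ˢ Cs).indicator u z = iB z.1 * iC z.2 * u z := by
      intro u z
      by_cases h1 : z.1 ∈ B <;> by_cases h2 : z.2 ∈ Cs <;>
        simp [iB, iC, Set.indicator, Set.mem_prod, h1, h2]
    -- measurability and boundedness of Φ z = b z.1 * iC z.2
    have hb_bdd : ∀ᵐ x ∂μ, |b x| ≤ ((1 : NNReal) : ℝ) := by
      refine ae_bdd_condExp_of_ae_bdd (Filter.Eventually.of_forall fun x => ?_)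
      by_cases hx : x ∈ B <;> simp [iB, hx]
    have hb_bdd' : ∀ᵐ z ∂(μ.prod μ), |b z.1| ≤ (1 : ℝ) := by
      have := (MeasureTheory.Measure.quasiMeasurePreserving_fst
        (μ := μ) (ν := μ)).ae hb_bdd
      simpa using this
    have hΦm : StronglyMeasurable[𝒜.prod 𝒜] fun z : S × S => b z.1 * iC z.2 := by
      refine StronglyMeasurable.mul ?_ ?_
      · exact (stronglyMeasurable_condExp (f := iB)).comp_measurable
          (@measurable_fst S S 𝒜 𝒜)
      · exact ((measurable_const.indicator hCs).comp (@measurable_snd S S 𝒜 𝒜)).stronglyMeasurable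
    have hΦ_bdd : ∀ᵐ z ∂(μ.prod μ), ‖b z.1 * iC z.2‖ ≤ (1 : ℝ) := by
      filter_upwards [hb_bdd'] with z hz
      rw [Real.norm_eq_abs, abs_mul]
      have h2 : |iC z.2| ≤ 1 := by by_cases hx : z.2 ∈ Cs <;> simp [iC, hx]
      calc |b z.1| * |iC z.2| ≤ 1 * 1 := mul_le_mul hz h2 (abs_nonneg _) zero_le_one
        _ = 1 := one_mul 1
    have hΦW_int : Integrable (fun z => (b z.1 * iC z.2) * W z) (μ.prod μ) :=
      hWint.bdd_mul ((hΦm.mono hm).aestronglyMeasurable) hΦ_bdd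
    have hpull := condExp_mul_of_stronglyMeasurable_left (μ := μ.prod μ) (m := 𝒜.prod 𝒜)
      hΦm hΦW_int hWint
    calc ∫ z in B ×ˢ Cs, k z ∂(μ.prod μ)
        = ∫ z, (B ×ˢ Cs).indicator k z ∂(μ.prod μ) := (integral_indicator hBC).symm
      _ = ∫ z, iB z.1 * iC z.2 * k z ∂(μ.prod μ) :=
          integral_congr_ae (Filter.Eventually.of_forall fun z => hind k z)
      _ = ∫ z, b z.1 * iC z.2 * k z ∂(μ.prod μ) := key2 B hB Cs hCsF k hk_int hksec
      _ = ∫ z, ((fun z : S × S => b z.1 * iC z.2) * ((μ.prod μ)[W|𝒜.prod 𝒜])) z ∂(μ.prod μ) := by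
          refine integral_congr_ae (Filter.Eventually.of_forall fun z => ?_)
          simp [mul_assoc, hk_def]
      _ = ∫ z, ((μ.prod μ)[(fun z : S × S => b z.1 * iC z.2) * W|𝒜.prod 𝒜]) z ∂(μ.prod μ) :=
          (integral_congr_ae hpull).symm
      _ = ∫ z, ((fun z : S × S => b z.1 * iC z.2) * W) z ∂(μ.prod μ) := integral_condExp hm
      _ = ∫ z, b z.1 * iC z.2 * g z ∂(μ.prod μ) := by
          refine integral_congr_ae ?_
          filter_upwards [hWg] with z hz
          simp [Pi.mul_apply, hz, mul_assoc]
      _ = ∫ z, iB z.1 * iC z.2 * g z ∂(μ.prod μ) := (key2 B hB Cs hCsF g hg_int hgsec).symm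
      _ = ∫ z, iB z.1 * iC z.2 * W z ∂(μ.prod μ) := by
          refine integral_congr_ae ?_
          filter_upwards [hWg] with z hz
          rw [hz]
      _ = ∫ z, (B ×ˢ Cs).indicator W z ∂(μ.prod μ) :=
          integral_congr_ae (Filter.Eventually.of_forall fun z => (hind W z).symm)
      _ = ∫ z in B ×ˢ Cs, W z ∂(μ.prod μ) := integral_indicator hBC
  -- extend to all sets in F ⊗ 𝒜 by the π-λ theorem
  have htotal : ∫ z, k z ∂(μ.prod μ) = ∫ z, W z ∂(μ.prod μ) := integral_condExp hm
  have hset : ∀ s : Set (S × S), MeasurableSet[F.prod 𝒜] s →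
      ∫ z in s, k z ∂(μ.prod μ) = ∫ z in s, W z ∂(μ.prod μ) := by
    have h_eq : (F.prod 𝒜) = MeasurableSpace.generateFrom
        (image2 (· ×ˢ ·) {s : Set S | MeasurableSet[F] s} {t : Set S | MeasurableSet[𝒜] t}) :=
      (@generateFrom_prod S S F 𝒜).symm
    refine MeasurableSpace.induction_on_inter (m := F.prod 𝒜) h_eq
      (@isPiSystem_prod S S F 𝒜) ?_ ?_ ?_ ?_
    · simp
    · rintro _ ⟨B, hB, Cs, hCs, rfl⟩
      exact hrect B hB Cs hCs
    · intro t ht hCt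
      have htF : MeasurableSet t := hm2 _ ht
      have h1 := integral_add_compl htF hk_int
      have h2 := integral_add_compl htF hWint
      linarith
    · intro f hdisj hfm hCf
      rw [integral_iUnion (fun i => hm2 _ (hfm i)) hdisj hk_int.integrableOn,
        integral_iUnion (fun i => hm2 _ (hfm i)) hdisj hWint.integrableOn]
      exact tsum_congr hCf
  -- conclude via uniqueness of conditional expectation w.r.t. F ⊗ 𝒜
  have hk_m2 : AEStronglyMeasurable[F.prod 𝒜] k (μ.prod μ) :=
    (hk_meas.mono hm12).aestronglyMeasurable
  have h1 : k =ᵐ[μ.prod μ] (μ.prod μ)[W|F.prod 𝒜] :=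
    ae_eq_condExp_of_forall_setIntegral_eq hm2 hWint
      (fun s _ _ => hk_int.integrableOn) (fun s hs _ => hset s hs) hk_m2
  have h2 : ((μ.prod μ)[W|F.prod 𝒜]) =ᵐ[μ.prod μ] h := by
    have e : ((μ.prod μ)[h|F.prod 𝒜]) = h :=
      condExp_of_stronglyMeasurable hm2 hhmeas.stronglyMeasurable hh_int
    calc ((μ.prod μ)[W|F.prod 𝒜]) =ᵐ[μ.prod μ] ((μ.prod μ)[h|F.prod 𝒜]) :=
          condExp_congr_ae hWh
      _ =ᵐ[μ.prod μ] h := by rw [e]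
  exact hWh.trans (h2.symm.trans h1.symm)
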